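/- Let g : ℝ^d × ℝ^d → ℝ^{d×l} satisfy |g(x,y)|² ≤ L(1 + |x-y|)^{q+2} for all x, y ∈ ℝ^d, for constants L > 0 and q > 0. For n ∈ ℕ with n ≥ 1, define g^n(x,y) := g(x,y)/(1 + n^{-1/2}|x-y|^{2q}). Then there exists a constant K > 0, independent of n, such that |g^n(x,y)|² ≤ K · min{ n^{1/4}(1 + |x-y|²), |g(x,y)|² } for all x, y ∈ ℝ^d. -/

import Mathlib

set_option maxHeartbeats 2000000 in
theorem stmt3 (d l : ℕ)
    (g : EuclideanSpace ℝ (Fin d) → EuclideanSpace ℝ (Fin d) → EuclideanSpace ℝ (Fin d × Fin l))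
    (L q : ℝ) (hL : 0 < L) (hq : 0 < q)
    (hg : ∀ x y : EuclideanSpace ℝ (Fin d), ‖g x y‖ ^ 2 ≤ L * (1 + ‖x - y‖) ^ (q + 2)) :
    ∃ K > 0, ∀ n : ℕ, 1 ≤ n → ∀ x y : EuclideanSpace ℝ (Fin d),
      ‖(1 + (n : ℝ) ^ (-(1/2) : ℝ) * ‖x - y‖ ^ (2 * q))⁻¹ • g x y‖ ^ 2
        ≤ K * min ((n : ℝ) ^ ((1 : ℝ)/4) * (1 + ‖x - y‖ ^ 2)) (‖g x y‖ ^ 2) := by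
  have h2 : (0:ℝ) < 2 ^ (q + 2) := Real.rpow_pos_of_pos two_pos _
  refine ⟨L * 2 ^ (q + 2) + 1, by positivity, ?_⟩
  intro n hn x y
  have hn1 : (1 : ℝ) ≤ (n:ℝ) := by exact_mod_cast hn
  have hn0 : (0 : ℝ) < (n:ℝ) := by linarith
  set r := ‖x - y‖ with hrdef
  have hr : 0 ≤ r := norm_nonneg _
  set t : ℝ := (n : ℝ) ^ (-(1/2) : ℝ) * r ^ (2 * q) with htdef
  have ht : 0 ≤ t := by positivity
  have hDpos : (0:ℝ) < 1 + t := by linarith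
  have hG := hg x y
  have hg2 : (0:ℝ) ≤ ‖g x y‖ ^ 2 := by positivity
  have hLHS : ‖(1 + t)⁻¹ • g x y‖ ^ 2 = ((1+t)⁻¹)^2 * ‖g x y‖^2 := by
    rw [norm_smul, Real.norm_eq_abs, abs_of_pos (by positivity), mul_pow]
  rw [hLHS]
  rw [← hrdef] at hG
  set A := ‖g x y‖ ^ 2 with hA
  clear_value t r A
  clear hA hLHS hg hrdef g x y d l
  have hinv1 : ((1+t)⁻¹ : ℝ) ≤ 1 := inv_le_one_of_one_le₀ (by linarith)
  have hinv0 : (0:ℝ) ≤ (1+t)⁻¹ := by positivity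
  have hi2 : ((1+t)⁻¹:ℝ)^2 ≤ 1 := by nlinarith
  have hi20 : (0:ℝ) ≤ ((1+t)⁻¹:ℝ)^2 := by positivity
  have hK0 : (0:ℝ) < L * 2 ^ (q + 2) + 1 := by positivity
  have hK1 : (1:ℝ) ≤ L * 2 ^ (q + 2) + 1 := by nlinarith
  have hKL : L * 2 ^ (q + 2) ≤ L * 2 ^ (q + 2) + 1 := by linarith
  have hn14 : (1:ℝ) ≤ (n:ℝ) ^ ((1:ℝ)/4) := Real.one_le_rpow hn1 (by norm_num)
  have hAle : ((1+t)⁻¹:ℝ)^2 * A ≤ A := by nlinarith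
  rw [mul_min_of_nonneg _ _ hK0.le]
  refine le_min ?_ ?_
  · have h4 : (1:ℝ) ≤ 1 + r ^ 2 := by nlinarith [sq_nonneg r]
    have h3 : (1:ℝ) ≤ (n:ℝ) ^ ((1:ℝ)/4) * (1 + r ^ 2) := by nlinarith
    rcases le_or_gt r 1 with hr1 | hr1
    · -- small r
      have hb : (1 + r) ^ (q + 2) ≤ 2 ^ (q + 2) :=
        Real.rpow_le_rpow (by linarith) (by linarith) (by linarith)
      have h1 : A ≤ L * 2 ^ (q + 2) :=
        le_trans hG (mul_le_mul_of_nonneg_left hb hL.le)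
      have h2' : ((1+t)⁻¹)^2 * A ≤ L * 2 ^ (q + 2) := le_trans hAle h1
      have h5 : (L * 2 ^ (q + 2) + 1) * 1 ≤
          (L * 2 ^ (q + 2) + 1) * ((n:ℝ) ^ ((1:ℝ)/4) * (1 + r ^ 2)) :=
        mul_le_mul_of_nonneg_left h3 hK0.le
      linarith [h2', h5]
    · -- large r
      have hrpos : (0:ℝ) < r := by linarith
      have hrq : (0:ℝ) < r ^ q := Real.rpow_pos_of_pos hrpos _
      set s : ℝ := (n : ℝ) ^ (-(1/4) : ℝ) * r ^ q with hsdef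
      have hs0 : 0 < s := by positivity
      clear_value s
      have e1 : ((n:ℝ) ^ (-(1/4):ℝ))^2 = (n:ℝ)^(-(1/2):ℝ) := by
        rw [← Real.rpow_natCast ((n:ℝ) ^ (-(1/4):ℝ)) 2, ← Real.rpow_mul hn0.le]
        norm_num
      have e2 : (r ^ q)^2 = r ^ (2*q) := by
        rw [← Real.rpow_natCast (r ^ q) 2, ← Real.rpow_mul hr]
        ring_nf
      have hs2 : s ^ 2 = t := by rw [hsdef, mul_pow, e1, e2, htdef]
      have hsD : s ≤ 1 + t := by
        rw [← hs2]
        nlinarith [sq_nonneg (s - 1)]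
      have hinvs : ((1+t)⁻¹ : ℝ) ≤ s⁻¹ := by
        rw [inv_le_inv₀ hDpos hs0]
        exact hsD
      have hb : (1 + r) ^ (q + 2) ≤ 2 ^ (q + 2) * r ^ (q + 2) := by
        rw [← Real.mul_rpow (by norm_num) hr]
        exact Real.rpow_le_rpow (by linarith) (by linarith) (by linarith)
      have e3 : r ^ (q+2) = r ^ q * r ^ (2:ℕ) := by
        rw [Real.rpow_add hrpos, show ((2:ℝ)) = ((2:ℕ):ℝ) by norm_num,
          Real.rpow_natCast]
      have e4 : ((n:ℝ) ^ (-(1/4):ℝ))⁻¹ = (n:ℝ)^((1:ℝ)/4) := by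
        rw [← Real.rpow_neg hn0.le]
        norm_num
      have hsr : s⁻¹ * r ^ (q + 2) = (n:ℝ) ^ ((1:ℝ)/4) * r ^ (2:ℕ) := by
        rw [hsdef, mul_inv, e4, e3]
        field_simp
      have h1 : ((1+t)⁻¹:ℝ)^2 ≤ s⁻¹ := by
        have h6 : ((1+t)⁻¹:ℝ)^2 ≤ (1+t)⁻¹ := by nlinarith
        linarith
      have hGb : A ≤ L * (2 ^ (q+2) * r ^ (q+2)) :=
        le_trans hG (mul_le_mul_of_nonneg_left hb hL.le)
      have key : ((1+t)⁻¹)^2 * A ≤ s⁻¹ * (L * (2 ^ (q + 2) * r ^ (q + 2))) :=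
        mul_le_mul h1 hGb hg2 (by positivity)
      have key2 : s⁻¹ * (L * (2 ^ (q + 2) * r ^ (q + 2))) =
          L * 2 ^ (q+2) * ((n:ℝ) ^ ((1:ℝ)/4) * r ^ (2:ℕ)) := by
        rw [show s⁻¹ * (L * (2 ^ (q + 2) * r ^ (q + 2))) =
          L * 2 ^ (q+2) * (s⁻¹ * r ^ (q + 2)) by ring, hsr]
      rw [key2] at key
      have hrr : (n:ℝ) ^ ((1:ℝ)/4) * (r:ℝ) ^ (2:ℕ) ≤ (n:ℝ) ^ ((1:ℝ)/4) * (1 + r ^ 2) :=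
        mul_le_mul_of_nonneg_left (by norm_num) (by linarith)
      have h7 : L * 2 ^ (q+2) * ((n:ℝ) ^ ((1:ℝ)/4) * r ^ (2:ℕ)) ≤
          (L * 2 ^ (q + 2) + 1) * ((n:ℝ) ^ ((1:ℝ)/4) * (1 + r ^ 2)) :=
        mul_le_mul hKL hrr (by positivity) hK0.le
      linarith
  · have h8 : A ≤ (L * 2 ^ (q + 2) + 1) * A := le_mul_of_one_le_left hg2 hK1
    linarith
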